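/- arXiv:2301.07644 — 2 statements merged into one kernel-verified Lean document; each statement's English description precedes it below -/
import Mathlib

section
/- Let D = diag(0, λ) be a diagonal real 2×2 matrix with λ ≠ 0 and U the flip matrix. Then for every a ∈ M₂(ℂ), ‖[D, UaU*]‖ = ‖[D, a]‖. -/
open Matrix
open scoped Matrix.Norms.L2Operator

lemma ring_id1 {R : Type*} [Ring R] (U X : R) (hUU : U * U = 1) :
    U * (U * X * U) * U = X := by
  calc U * (U * X * U) * U = (U * U) * X * (U * U) := by noncomm_ring
    _ = X := by rw [hUU]; noncomm_ring

lemma ring_id2 {R : Type*} [Ring R] (U D a : R) (l : R) (hl : ∀ x : R, l * x = x * l)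
    (hUU : U * U = 1) (hUDU : U * D * U = l * 1 - D) :
    D * (U * a * U) - (U * a * U) * D = U * (a * D - D * a) * U := by
  have hD' : D = l * 1 - U * D * U := by rw [hUDU]; abel
  calc D * (U * a * U) - (U * a * U) * D
      = (l * 1 - U * D * U) * (U * a * U) - (U * a * U) * (l * 1 - U * D * U) := by rw [← hD']
    _ = (U * a * U) * (U * D * U) - (U * D * U) * (U * a * U) := by
        simp only [sub_mul, mul_sub, one_mul, mul_one]
        rw [hl (U * a * U)]; abel
    _ = U * (a * (U * U) * D) * U - U * (D * (U * U) * a) * U := by noncomm_ring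
    _ = U * (a * D - D * a) * U := by rw [hUU]; noncomm_ring

lemma conj_norm (U X : Matrix (Fin 2) (Fin 2) ℂ) (hH : Uᴴ = U) (hUU : U * U = 1) :
    ‖U * X * U‖ = ‖X‖ := by
  have hn : ‖U‖ = 1 := by
    have h := Matrix.l2_opNorm_conjTranspose_mul_self U
    rw [hH, hUU] at h
    have h1 : ‖(1 : Matrix (Fin 2) (Fin 2) ℂ)‖ = 1 := norm_one
    nlinarith [norm_nonneg U]
  have bound : ∀ Y : Matrix (Fin 2) (Fin 2) ℂ, ‖U * Y * U‖ ≤ ‖Y‖ := by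
    intro Y
    calc ‖U * Y * U‖ ≤ ‖U * Y‖ * ‖U‖ := Matrix.l2_opNorm_mul _ _
      _ ≤ (‖U‖ * ‖Y‖) * ‖U‖ :=
          mul_le_mul_of_nonneg_right (Matrix.l2_opNorm_mul _ _) (norm_nonneg _)
      _ = ‖Y‖ := by rw [hn]; ring
  apply le_antisymm (bound X)
  calc ‖X‖ = ‖U * (U * X * U) * U‖ := by rw [ring_id1 U X hUU]
    _ ≤ ‖U * X * U‖ := bound _

/-- For `D = diag(0, λ)` with `λ ≠ 0` real and the flip matrix `U`,
conjugation by `U` preserves the operator norm of the commutator with `D`. -/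
theorem stmt_2 (l : ℝ) (hl : l ≠ 0)
    (D : Matrix (Fin 2) (Fin 2) ℂ) (hD : D = Matrix.diagonal ![(0 : ℂ), (l : ℂ)])
    (U : Matrix (Fin 2) (Fin 2) ℂ) (hU : U = !![0, 1; 1, 0]) :
    ∀ a : Matrix (Fin 2) (Fin 2) ℂ,
      ‖D * (U * a * Uᴴ) - (U * a * Uᴴ) * D‖ = ‖D * a - a * D‖ := by
  intro a
  have hUH : Uᴴ = U := by
    subst hU; ext i j; fin_cases i <;> fin_cases j <;> simp [conjTranspose_apply]
  have hUU : U * U = 1 := by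
    subst hU; ext i j; fin_cases i <;> fin_cases j <;>
      simp [Matrix.mul_apply, Fin.sum_univ_two, Matrix.one_apply]
  have hUDU : U * D * U = ((l : ℂ) • (1 : Matrix (Fin 2) (Fin 2) ℂ)) * 1 - D := by
    subst hU hD
    ext i j; fin_cases i <;> fin_cases j <;>
      simp [Matrix.mul_apply, Fin.sum_univ_two, Matrix.diagonal, Matrix.one_apply,
        Matrix.vecHead, Matrix.vecTail]
  have hcomm : ∀ x : Matrix (Fin 2) (Fin 2) ℂ,
      ((l : ℂ) • (1 : Matrix (Fin 2) (Fin 2) ℂ)) * x = x * ((l : ℂ) • 1) := by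
    intro x; rw [smul_mul_assoc, mul_smul_comm, one_mul, mul_one]
  have key := ring_id2 U D a ((l : ℂ) • 1) hcomm hUU hUDU
  rw [hUH, key, conj_norm U _ hUH hUU,
    show a * D - D * a = -(D * a - a * D) by abel, norm_neg]
end

section
/- Let τ be the normalized trace on M₂(ℂ), H the GNS space (M₂(ℂ) with inner product ⟨a,b⟩ = τ(a*b)), P₀ the projection onto ℂ·1, Q₁ = 1-P₀, and D = λ₁ Q₁ with λ₁ > 0 acting on H. Then for σ₃ = diag(1,-1) acting by left multiplication, ‖[D, σ₃]‖ = λ₁. -/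
open Matrix

attribute [local instance] Matrix.frobeniusNormedAddCommGroup Matrix.frobeniusNormedSpace

noncomputable section

/-- Normalized trace on `M₂(ℂ)`. -/
def tau (a : Matrix (Fin 2) (Fin 2) ℂ) : ℂ := Matrix.trace a / 2

/-- Orthogonal projection of the GNS space of the normalized trace on `M₂(ℂ)` onto `ℂ·1`. -/
def P0 : Matrix (Fin 2) (Fin 2) ℂ →ₗ[ℂ] Matrix (Fin 2) (Fin 2) ℂ where
  toFun a := tau a • 1
  map_add' a b := by simp [tau, Matrix.trace_add, add_div, add_smul]
  map_smul' c a := by simp [tau, Matrix.trace_smul, smul_smul, mul_div_assoc]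

/-- A matrix viewed as the operator of left multiplication on the GNS space. -/
def Lmul (x : Matrix (Fin 2) (Fin 2) ℂ) :
    Matrix (Fin 2) (Fin 2) ℂ →L[ℂ] Matrix (Fin 2) (Fin 2) ℂ :=
  LinearMap.toContinuousLinearMap (LinearMap.mulLeft ℂ x)

/-- The Dirac operator `D = λ₁ Q₁` (`Q₁ = 1 - P₀`) on the GNS space of the normalized trace
on `M₂(ℂ)`. -/
def Dirac (l : ℝ) : Matrix (Fin 2) (Fin 2) ℂ →L[ℂ] Matrix (Fin 2) (Fin 2) ℂ :=
  LinearMap.toContinuousLinearMap ((l : ℂ) • (LinearMap.id - P0))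

private lemma hnorm_aux (M : Matrix (Fin 2) (Fin 2) ℂ) :
    ‖M‖ = Real.sqrt (‖M 0 0‖ ^ 2 + ‖M 0 1‖ ^ 2 + ‖M 1 0‖ ^ 2 + ‖M 1 1‖ ^ 2) := by
  rw [Matrix.frobenius_norm_def, Real.sqrt_eq_rpow]
  congr 1
  simp only [Fin.sum_univ_two, Real.rpow_two]
  ring

/-- For `D = λ₁ Q₁` with `λ₁ > 0` and `σ₃ = diag(1,-1)` acting by left multiplication,
`‖[D, σ₃]‖ = λ₁`. -/
theorem stmt_16 (l : ℝ) (hl : 0 < l)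
    (σ₃ : Matrix (Fin 2) (Fin 2) ℂ) (h3 : σ₃ = !![1, 0; 0, -1]) :
    ContinuousLinearMap.opNorm (Dirac l * Lmul σ₃ - Lmul σ₃ * Dirac l) = l := by
  subst h3
  set C := Dirac l * Lmul !![1, 0; 0, -1] - Lmul !![1, 0; 0, -1] * Dirac l with hCdef
  have hC : ∀ a : Matrix (Fin 2) (Fin 2) ℂ,
      C a = (l : ℂ) • !![a 1 1, 0; 0, -(a 0 0)] := by
    intro a
    ext i j
    fin_cases i <;> fin_cases j <;>
      simp [hCdef, Dirac, Lmul, P0, tau, Matrix.trace_fin_two, Matrix.mul_apply,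
        Fin.sum_univ_two, Matrix.one_apply, Matrix.vecMul, dotProduct, Matrix.vecHead, Matrix.vecTail,
        Matrix.sub_apply, Matrix.smul_apply] <;> ring
  apply le_antisymm
  · apply ContinuousLinearMap.opNorm_le_bound _ hl.le
    intro a
    refine (congrArg norm (hC a)).trans_le ?_
    rw [norm_smul]
    simp only [Complex.norm_real, Real.norm_eq_abs, abs_of_pos hl]
    gcongr
    rw [hnorm_aux, hnorm_aux a]
    apply Real.sqrt_le_sqrt
    simp
    nlinarith [sq_nonneg ‖a 0 1‖, sq_nonneg ‖a 1 0‖]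
  · have h1 : ‖C (1 : Matrix (Fin 2) (Fin 2) ℂ)‖ ≤ ContinuousLinearMap.opNorm C * ‖(1 : Matrix (Fin 2) (Fin 2) ℂ)‖ :=
      C.le_opNorm 1
    have hC1 : ‖C (1 : Matrix (Fin 2) (Fin 2) ℂ)‖ = l * Real.sqrt 2 := by
      rw [hC 1, norm_smul, hnorm_aux]
      simp [Matrix.one_apply, abs_of_pos hl]
      norm_num
    have hone : ‖(1 : Matrix (Fin 2) (Fin 2) ℂ)‖ = Real.sqrt 2 := by
      rw [hnorm_aux]
      simp [Matrix.one_apply]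
      norm_num
    rw [hC1, hone] at h1
    have h2 : (0:ℝ) < Real.sqrt 2 := by positivity
    exact le_of_mul_le_mul_right (by linarith [h1]) h2

end
end
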